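/- Let G be a compact topological group and Π : G →* Matrix.orthogonalGroup (Fin n) ℝ a continuous monoid homomorphism (so G acts on ℝⁿ = (Fin n → ℝ) by w ↦ (Π g).val.mulVec w). For u, v : Fin n → ℝ, there exists g ∈ G with (Π g).val.mulVec u = v if and only if p(u) = p(v) for every Π-invariant polynomial p, where p : MvPolynomial (Fin n) ℝ is Π-invariant means MvPolynomial.eval ((Π g).val.mulVec w) p = MvPolynomial.eval w p for all g ∈ G and all w : Fin n → ℝ. -/

import Mathlib

open Matrix

section Aux
open MvPolynomial MeasureTheory Pointwise

noncomputable def linPoly (n : ℕ) (A : Matrix (Fin n) (Fin n) ℝ) :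
    Fin n → MvPolynomial (Fin n) ℝ :=
  fun i => ∑ j, monomial (Finsupp.single j 1) (A i j)

lemma aeval_linPoly (n : ℕ) (A : Matrix (Fin n) (Fin n) ℝ) (w : Fin n → ℝ) (i : Fin n) :
    MvPolynomial.aeval w (linPoly n A i) = A.mulVec w i := by
  simp [linPoly, aeval_monomial, Matrix.mulVec, dotProduct]

lemma aeval_eq_eval' (n : ℕ) (f : Fin n → ℝ) (p : MvPolynomial (Fin n) ℝ) :
    MvPolynomial.aeval f p = MvPolynomial.eval f p := by
  simp [aeval_def]

lemma eval_aeval_linPoly (n : ℕ) (A : Matrix (Fin n) (Fin n) ℝ) (q : MvPolynomial (Fin n) ℝ)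
    (w : Fin n → ℝ) :
    MvPolynomial.eval w (MvPolynomial.aeval (linPoly n A) q)
      = MvPolynomial.eval (A.mulVec w) q := by
  rw [← aeval_eq_eval', ← aeval_eq_eval']
  rw [show (MvPolynomial.aeval w) ((MvPolynomial.aeval (linPoly n A)) q)
      = ((MvPolynomial.aeval w : MvPolynomial (Fin n) ℝ →ₐ[ℝ] ℝ).comp
        (MvPolynomial.aeval (linPoly n A))) q from rfl,
    comp_aeval]
  have : (fun i => (MvPolynomial.aeval w) (linPoly n A i)) = A.mulVec w :=
    funext (aeval_linPoly n A w)
  rw [this]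

lemma support_linPoly (n : ℕ) (A : Matrix (Fin n) (Fin n) ℝ) (i : Fin n) :
    (linPoly n A i).support ⊆ Finset.univ.biUnion (fun j : Fin n => {Finsupp.single j 1}) := by
  classical
  refine MvPolynomial.support_sum.trans ?_
  refine Finset.biUnion_subset.2 fun j _ => ?_
  refine Finset.Subset.trans ?_ (Finset.subset_biUnion_of_mem _ (Finset.mem_univ j))
  rw [support_monomial]
  split <;> simp

lemma coeff_linPoly_continuous {G : Type*} [TopologicalSpace G]
    (n : ℕ) (A : G → Matrix (Fin n) (Fin n) ℝ) (hA : Continuous A) (i : Fin n)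
    (m : (Fin n) →₀ ℕ) :
    Continuous fun g => MvPolynomial.coeff m (linPoly n (A g) i) := by
  classical
  simp only [linPoly, MvPolynomial.coeff_sum, coeff_monomial]
  apply continuous_finset_sum
  intro j _
  by_cases h : Finsupp.single j 1 = m
  · simpa [h] using hA.matrix_elem i j
  · simpa [h] using continuous_const

lemma pc_props {G : Type*} [TopologicalSpace G]
    (n : ℕ) (A : G → Matrix (Fin n) (Fin n) ℝ) (hA : Continuous A)
    (q : MvPolynomial (Fin n) ℝ) :
    (∀ m, Continuous fun g =>
        MvPolynomial.coeff m (MvPolynomial.aeval (linPoly n (A g)) q)) ∧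
      ∃ S : Finset ((Fin n) →₀ ℕ), ∀ g,
        (MvPolynomial.aeval (linPoly n (A g)) q).support ⊆ S := by
  classical
  induction q using MvPolynomial.induction_on with
  | C a =>
    refine ⟨fun m => ?_, ⟨(C a : MvPolynomial (Fin n) ℝ).support, fun g => ?_⟩⟩
    · by_cases h : (0 : (Fin n) →₀ ℕ) = m <;> simp [aeval_C, coeff_C, h, continuous_const]
    · simp [aeval_C]
  | add p r hp hr =>
    obtain ⟨hpc, Sp, hSp⟩ := hp
    obtain ⟨hrc, Sr, hSr⟩ := hr
    refine ⟨fun m => ?_, ⟨Sp ∪ Sr, fun g => ?_⟩⟩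
    · simpa [map_add, coeff_add] using (show Continuous fun g => MvPolynomial.coeff m (MvPolynomial.aeval (linPoly n (A g)) p) + MvPolynomial.coeff m (MvPolynomial.aeval (linPoly n (A g)) r) from (hpc m).add (hrc m))
    · rw [map_add]
      exact MvPolynomial.support_add.trans (Finset.union_subset_union (hSp g) (hSr g))
  | mul_X p i hp =>
    obtain ⟨hpc, Sp, hSp⟩ := hp
    refine ⟨fun m => ?_, ⟨Sp + Finset.univ.biUnion (fun j : Fin n => {Finsupp.single j 1}),
      fun g => ?_⟩⟩
    · simp only [_root_.map_mul, aeval_X, coeff_mul]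
      apply continuous_finset_sum
      intro x _
      exact (hpc x.1).mul (coeff_linPoly_continuous n A hA i x.2)
    · rw [_root_.map_mul, aeval_X]
      exact (MvPolynomial.support_mul _ _).trans
        (Finset.add_subset_add (hSp g) (support_linPoly n (A g) i))

lemma continuous_mv_eval (n : ℕ) (q : MvPolynomial (Fin n) ℝ) :
    Continuous fun x : Fin n → ℝ => MvPolynomial.eval x q := by
  simp only [MvPolynomial.eval_eq']
  exact continuous_finset_sum _ fun d _ =>
    continuous_const.mul (continuous_finset_prod _ fun i _ => (continuous_apply i).pow _)

lemma exists_separating_poly (n : ℕ) (O₁ O₂ : Set (Fin n → ℝ)) (h1 : IsCompact O₁)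
    (h2 : IsCompact O₂) (hd : Disjoint O₁ O₂) :
    ∃ q : MvPolynomial (Fin n) ℝ,
      (∀ x ∈ O₁, MvPolynomial.eval x q ≤ 1/4) ∧ (∀ x ∈ O₂, 3/4 ≤ MvPolynomial.eval x q) := by
  classical
  obtain ⟨f, hf0, hf1, -⟩ :=
    exists_continuous_zero_one_of_isClosed h1.isClosed h2.isClosed hd
  set K : Set (Fin n → ℝ) := O₁ ∪ O₂ with hK
  haveI : CompactSpace ↥K := isCompact_iff_compactSpace.mp (h1.union h2)
  set toC : MvPolynomial (Fin n) ℝ →ₐ[ℝ] C(↥K, ℝ) :=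
    MvPolynomial.aeval (fun i => ⟨fun x => (x : Fin n → ℝ) i,
      (continuous_apply i).comp continuous_subtype_val⟩) with htoC
  have hToC : ∀ (p : MvPolynomial (Fin n) ℝ) (x : ↥K),
      toC p x = MvPolynomial.eval (x : Fin n → ℝ) p := by
    intro p x
    have h1 : (ContinuousMap.evalAlgHom ℝ ℝ x).comp toC
        = MvPolynomial.aeval (fun i => (x : Fin n → ℝ) i) := by
      rw [htoC, comp_aeval]
      congr 1
    have h2 := congrArg (fun φ => φ p) h1
    simp only [AlgHom.comp_apply, ContinuousMap.evalAlgHom_apply] at h2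
    rw [h2]
    simp [aeval_def]
  have hsep : (toC.range : Subalgebra ℝ C(↥K, ℝ)).SeparatesPoints := by
    intro x y hxy
    have hco : (x : Fin n → ℝ) ≠ (y : Fin n → ℝ) := Subtype.coe_injective.ne hxy
    obtain ⟨i, hi⟩ := Function.ne_iff.mp hco
    refine ⟨toC (X i), ⟨toC (X i), ⟨X i, rfl⟩, rfl⟩, ?_⟩
    simpa [hToC] using hi
  obtain ⟨⟨q', hq'mem⟩, hq'⟩ :=
    ContinuousMap.exists_mem_subalgebra_near_continuous_of_separatesPoints toC.range hsep
      (fun x : ↥K => f x) (f.continuous.comp continuous_subtype_val) (1/4) (by norm_num)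
  obtain ⟨q, rfl⟩ := (AlgHom.mem_range _).mp hq'mem
  refine ⟨q, ?_, ?_⟩
  · intro x hx
    have h := hq' ⟨x, Or.inl hx⟩
    rw [hToC] at h
    have hf : f x = 0 := hf0 hx
    simp only [hf] at h
    have := abs_lt.mp (by simpa [Real.norm_eq_abs] using h)
    linarith [this.2]
  · intro x hx
    have h := hq' ⟨x, Or.inr hx⟩
    rw [hToC] at h
    have hf : f x = 1 := hf1 hx
    simp only [hf] at h
    have := abs_lt.mp (by simpa [Real.norm_eq_abs] using h)
    linarith [this.1]

end Aux

/-- A multivariate polynomial is invariant under an orthogonal representation `Φ`. -/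
def IsInvariantPoly {G : Type*} [Group G] (n : ℕ)
    (Φ : G →* Matrix.orthogonalGroup (Fin n) ℝ)
    (p : MvPolynomial (Fin n) ℝ) : Prop :=
  ∀ (g : G) (w : Fin n → ℝ),
    MvPolynomial.eval ((Φ g : Matrix (Fin n) (Fin n) ℝ).mulVec w) p =
      MvPolynomial.eval w p

open MvPolynomial MeasureTheory Pointwise in
theorem orbit_iff_invariant_polynomials
    {G : Type*} [Group G] [TopologicalSpace G] [IsTopologicalGroup G] [CompactSpace G]
    (n : ℕ) (Φ : G →* Matrix.orthogonalGroup (Fin n) ℝ)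
    (hΦ : Continuous fun g => (Φ g : Matrix (Fin n) (Fin n) ℝ))
    (u v : Fin n → ℝ) :
    (∃ g : G, (Φ g : Matrix (Fin n) (Fin n) ℝ).mulVec u = v) ↔
    (∀ p : MvPolynomial (Fin n) ℝ, IsInvariantPoly n Φ p →
      MvPolynomial.eval u p = MvPolynomial.eval v p) := by
  constructor
  · rintro ⟨g, hg⟩ p hp
    rw [← hg]
    exact (hp g u).symm
  · intro h
    by_contra hng
    classical
    -- measure-theoretic setup
    letI : MeasurableSpace G := borel G
    haveI : BorelSpace G := ⟨rfl⟩
    haveI : Nonempty G := ⟨1⟩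
    set μ : Measure G := Measure.haarMeasure (⊤ : TopologicalSpace.PositiveCompacts G) with hμ
    haveI : IsProbabilityMeasure μ := ⟨by
      rw [hμ, ← TopologicalSpace.PositiveCompacts.coe_top (α := G)]
      exact Measure.haarMeasure_self⟩
    have integ : ∀ f : G → ℝ, Continuous f → Integrable f μ := fun f hf =>
      hf.integrable_of_hasCompactSupport (HasCompactSupport.of_compactSpace f)
    have hAinv : Continuous fun g : G => ((Φ g⁻¹ : Matrix (Fin n) (Fin n) ℝ)) :=
      hΦ.comp continuous_inv
    -- the two orbits
    set O₁ : Set (Fin n → ℝ) := Set.range (fun g : G => (Φ g : Matrix (Fin n) (Fin n) ℝ).mulVec u)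
      with hO₁
    set O₂ : Set (Fin n → ℝ) := Set.range (fun g : G => (Φ g : Matrix (Fin n) (Fin n) ℝ).mulVec v)
      with hO₂
    have h1 : IsCompact O₁ := isCompact_range (hΦ.matrix_mulVec continuous_const)
    have h2 : IsCompact O₂ := isCompact_range (hΦ.matrix_mulVec continuous_const)
    have hcoe : ∀ a b : G, ((Φ (a * b) : Matrix (Fin n) (Fin n) ℝ))
        = (Φ a : Matrix (Fin n) (Fin n) ℝ) * (Φ b : Matrix (Fin n) (Fin n) ℝ) := by
      intro a b
      rw [_root_.map_mul]
      rfl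
    have hd : Disjoint O₁ O₂ := by
      rw [Set.disjoint_left]
      rintro x ⟨a, rfl⟩ ⟨b, hb⟩
      apply hng
      refine ⟨b⁻¹ * a, ?_⟩
      calc (Φ (b⁻¹ * a) : Matrix (Fin n) (Fin n) ℝ).mulVec u
          = (Φ b⁻¹ : Matrix (Fin n) (Fin n) ℝ).mulVec
              ((Φ a : Matrix (Fin n) (Fin n) ℝ).mulVec u) := by
            rw [Matrix.mulVec_mulVec, hcoe]
        _ = (Φ b⁻¹ : Matrix (Fin n) (Fin n) ℝ).mulVec
              ((Φ b : Matrix (Fin n) (Fin n) ℝ).mulVec v) := by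
            have hb' : (Φ b : Matrix (Fin n) (Fin n) ℝ).mulVec v
                = (Φ a : Matrix (Fin n) (Fin n) ℝ).mulVec u := hb
            rw [hb']
        _ = (Φ (b⁻¹ * b) : Matrix (Fin n) (Fin n) ℝ).mulVec v := by
            rw [Matrix.mulVec_mulVec, hcoe]
        _ = v := by simp
    obtain ⟨q, hq1, hq2⟩ := exists_separating_poly n O₁ O₂ h1 h2 hd
    -- averaging over the group
    obtain ⟨hc, S, hS⟩ :=
      pc_props n (fun g : G => ((Φ g⁻¹ : Matrix (Fin n) (Fin n) ℝ))) hAinv q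
    set pc : G → MvPolynomial (Fin n) ℝ :=
      fun g => MvPolynomial.aeval (linPoly n ((Φ g⁻¹ : Matrix (Fin n) (Fin n) ℝ))) q with hpc
    set avg : MvPolynomial (Fin n) ℝ :=
      ∑ m ∈ S, monomial m (∫ g, MvPolynomial.coeff m (pc g) ∂μ) with havg
    have heval : ∀ w, MvPolynomial.eval w avg
        = ∫ g, MvPolynomial.eval ((Φ g⁻¹ : Matrix (Fin n) (Fin n) ℝ).mulVec w) q ∂μ := by
      intro w
      have e1 : MvPolynomial.eval w avg
          = ∑ m ∈ S, (∫ g, MvPolynomial.coeff m (pc g) ∂μ) * ∏ i, w i ^ m i := by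
        rw [havg, map_sum]
        exact Finset.sum_congr rfl fun m _ => by rw [eval_monomial, Finsupp.prod_pow]
      rw [e1]
      have e2 : ∀ m ∈ S, (∫ g, MvPolynomial.coeff m (pc g) ∂μ) * ∏ i, w i ^ m i
          = ∫ g, MvPolynomial.coeff m (pc g) * ∏ i, w i ^ m i ∂μ := fun m _ =>
        (integral_mul_const _ _).symm
      rw [Finset.sum_congr rfl e2,
        ← integral_finset_sum _ (fun m _ => integ (fun g => MvPolynomial.coeff m (pc g) * ∏ i, w i ^ m i) ((hc m).mul continuous_const))]
      congr 1
      funext g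
      rw [← eval_aeval_linPoly n _ q w, MvPolynomial.eval_eq']
      exact (Finset.sum_subset (hS g) (fun m _ hm => by
        rw [MvPolynomial.notMem_support_iff.mp hm, zero_mul])).symm
    have hIcont : ∀ w : Fin n → ℝ, Continuous fun g : G =>
        MvPolynomial.eval ((Φ g⁻¹ : Matrix (Fin n) (Fin n) ℝ).mulVec w) q :=
      fun w => (continuous_mv_eval n q).comp (hAinv.matrix_mulVec continuous_const)
    have hinv : IsInvariantPoly n Φ avg := by
      intro g₀ w
      rw [heval, heval]
      have key : ∀ g : G, (Φ g⁻¹ : Matrix (Fin n) (Fin n) ℝ).mulVec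
          ((Φ g₀ : Matrix (Fin n) (Fin n) ℝ).mulVec w)
          = (Φ (g₀⁻¹ * g)⁻¹ : Matrix (Fin n) (Fin n) ℝ).mulVec w := by
        intro g
        rw [Matrix.mulVec_mulVec]
        have e : (g₀⁻¹ * g)⁻¹ = g⁻¹ * g₀ := by group
        rw [e, hcoe]
      simp_rw [key]
      exact integral_mul_left_eq_self
        (fun h => MvPolynomial.eval ((Φ h⁻¹ : Matrix (Fin n) (Fin n) ℝ).mulVec w) q) g₀⁻¹
    have hb1 : MvPolynomial.eval u avg ≤ 1/4 := by
      rw [heval]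
      calc ∫ g, MvPolynomial.eval ((Φ g⁻¹ : Matrix (Fin n) (Fin n) ℝ).mulVec u) q ∂μ
          ≤ ∫ _, (1/4 : ℝ) ∂μ :=
            integral_mono (integ _ (hIcont u)) (integ _ continuous_const)
              (fun g => hq1 _ ⟨g⁻¹, rfl⟩)
        _ = 1/4 := by simp
    have hb2 : (3/4 : ℝ) ≤ MvPolynomial.eval v avg := by
      rw [heval]
      calc (3/4 : ℝ) = ∫ _, (3/4 : ℝ) ∂μ := by simp
        _ ≤ ∫ g, MvPolynomial.eval ((Φ g⁻¹ : Matrix (Fin n) (Fin n) ℝ).mulVec v) q ∂μ :=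
            integral_mono (integ _ continuous_const) (integ _ (hIcont v))
              (fun g => hq2 _ ⟨g⁻¹, rfl⟩)
    have := h avg hinv
    linarith
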